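/- For the sl_3 case with n = p = q = 1 and b(0) = (1 - t3/t1)/((1 - t2/t1)(1 - t3/t2)), the coefficient of e^{[[λ, μ, ν]]} = t1^{-μ} t2^{λ} t3^{ν} in b(0) equals 1 if (λ = μ ≥ 0 and ν = 0) or (λ = -ν < 0 and μ = 0), and equals 0 for all other integer triples (λ, μ, ν) with μ, ν ≥ 0. -/

import Mathlib

open MvPowerSeries Finsupp

private noncomputable def d2 (a b : ℕ) : Fin 2 →₀ ℕ :=
  Finsupp.single (0 : Fin 2) a + Finsupp.single (1 : Fin 2) b

private lemma d2_apply0 (a b : ℕ) : d2 a b (0 : Fin 2) = a := by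
  simp [d2, Finsupp.single_apply]

private lemma d2_apply1 (a b : ℕ) : d2 a b (1 : Fin 2) = b := by
  simp [d2, Finsupp.single_apply]

private lemma d2_eq_zero_iff (a b : ℕ) : d2 a b = 0 ↔ a = 0 ∧ b = 0 := by
  constructor
  · intro h
    constructor
    · have := congrArg (fun f => f (0 : Fin 2)) h
      simpa [d2_apply0] using this
    · have := congrArg (fun f => f (1 : Fin 2)) h
      simpa [d2_apply1] using this
  · rintro ⟨rfl, rfl⟩
    simp [d2]

private lemma d2_ext {a b a' b' : ℕ} (h0 : a = a') (h1 : b = b') : d2 a b = d2 a' b' := by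
  rw [h0, h1]

private lemma d2_eq_iff (a b a' b' : ℕ) : d2 a b = d2 a' b' ↔ a = a' ∧ b = b' := by
  constructor
  · intro h
    constructor
    · have := congrArg (fun f => f (0 : Fin 2)) h
      simpa [d2_apply0] using this
    · have := congrArg (fun f => f (1 : Fin 2)) h
      simpa [d2_apply1] using this
  · rintro ⟨rfl, rfl⟩; rfl

private lemma single0_le_d2 (a b : ℕ) :
    Finsupp.single (0 : Fin 2) 1 ≤ d2 a b ↔ 1 ≤ a := by
  rw [Finsupp.single_le_iff, d2_apply0]

private lemma single1_le_d2 (a b : ℕ) :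
    Finsupp.single (1 : Fin 2) 1 ≤ d2 a b ↔ 1 ≤ b := by
  rw [Finsupp.single_le_iff, d2_apply1]

private lemma d2_sub0 (a b : ℕ) : d2 (a+1) b - Finsupp.single (0 : Fin 2) 1 = d2 a b := by
  ext i
  rw [Finsupp.tsub_apply]
  fin_cases i
  · simp [d2_apply0]
  · simp [d2_apply1, Finsupp.single_apply]

private lemma d2_sub1 (a b : ℕ) : d2 a (b+1) - Finsupp.single (1 : Fin 2) 1 = d2 a b := by
  ext i
  rw [Finsupp.tsub_apply]
  fin_cases i
  · simp [d2_apply0, Finsupp.single_apply]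
  · simp [d2_apply1]

private lemma d2_le_iff (a b a' b' : ℕ) : d2 a b ≤ d2 a' b' ↔ a ≤ a' ∧ b ≤ b' := by
  constructor
  · intro h
    exact ⟨by simpa [d2_apply0] using h (0 : Fin 2), by simpa [d2_apply1] using h (1 : Fin 2)⟩
  · rintro ⟨h0, h1⟩ i
    fin_cases i
    · simpa [d2_apply0] using h0
    · simpa [d2_apply1] using h1

private lemma d2_sub01 (a b : ℕ) : d2 (a+1) (b+1) - d2 1 1 = d2 a b := by
  ext i
  rw [Finsupp.tsub_apply]
  fin_cases i
  · simp [d2_apply0]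
  · simp [d2_apply1]

section main

variable (F : MvPowerSeries (Fin 2) ℤ)
    (hF : F * ((1 - MvPowerSeries.X (0 : Fin 2)) * (1 - MvPowerSeries.X (1 : Fin 2)))
      = 1 - MvPowerSeries.X (0 : Fin 2) * MvPowerSeries.X (1 : Fin 2))

include hF

private lemma key_rel (a b : ℕ) :
    MvPowerSeries.coeff (R := ℤ) (d2 a b) F
      - (if 1 ≤ a then MvPowerSeries.coeff (R := ℤ) (d2 a b - Finsupp.single (0 : Fin 2) 1) F else 0)
      - (if 1 ≤ b then MvPowerSeries.coeff (R := ℤ) (d2 a b - Finsupp.single (1 : Fin 2) 1) F else 0)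
      + (if d2 1 1 ≤ d2 a b then MvPowerSeries.coeff (R := ℤ) (d2 a b - d2 1 1) F else 0)
      = (if d2 a b = 0 then 1 else 0) - (if d2 a b = d2 1 1 then 1 else 0) := by
  have expand : F * ((1 - MvPowerSeries.X (0 : Fin 2)) * (1 - MvPowerSeries.X (1 : Fin 2)))
      = F - F * MvPowerSeries.X (0 : Fin 2) - F * MvPowerSeries.X (1 : Fin 2)
        + F * (MvPowerSeries.X (0 : Fin 2) * MvPowerSeries.X (1 : Fin 2)) := by ring
  have hXX : MvPowerSeries.X (0 : Fin 2) * MvPowerSeries.X (1 : Fin 2)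
      = MvPowerSeries.monomial (R := ℤ) (d2 1 1) 1 := by
    rw [MvPowerSeries.X_def, MvPowerSeries.X_def, MvPowerSeries.monomial_mul_monomial, one_mul]
    rfl
  have h := congrArg (MvPowerSeries.coeff (R := ℤ) (d2 a b)) hF
  rw [expand] at h
  rw [map_add, map_sub, map_sub, map_sub] at h
  rw [hXX] at h
  rw [MvPowerSeries.X_def, MvPowerSeries.X_def] at h
  rw [MvPowerSeries.coeff_mul_monomial, MvPowerSeries.coeff_mul_monomial,
    MvPowerSeries.coeff_mul_monomial, MvPowerSeries.coeff_one,
    MvPowerSeries.coeff_monomial] at h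
  simp only [mul_one] at h
  simp only [single0_le_d2, single1_le_d2] at h
  exact h

private lemma key : ∀ a b : ℕ,
    MvPowerSeries.coeff (R := ℤ) (d2 a b) F = if a = 0 ∨ b = 0 then 1 else 0 := by
  intro a
  induction a with
  | zero =>
    intro b
    induction b with
    | zero =>
      have h := key_rel F hF 0 0
      simp only [show ¬(1:ℕ) ≤ 0 by omega, if_false] at h
      rw [if_neg (by rw [d2_le_iff]; omega), if_pos (by rw [d2_eq_zero_iff]; omega),
        if_neg (by rw [d2_eq_iff]; omega)] at h
      simpa using h
    | succ b ih =>
      have h := key_rel F hF 0 (b+1)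
      simp only [show ¬(1:ℕ) ≤ 0 by omega, if_false, show (1:ℕ) ≤ b+1 by omega, if_true] at h
      rw [if_neg (by rw [d2_le_iff]; omega), if_neg (by rw [d2_eq_zero_iff]; omega),
        if_neg (by rw [d2_eq_iff]; omega), d2_sub1, ih] at h
      simp only [true_or, if_pos] at h ⊢
      linarith [h]
  | succ a iha =>
    intro b
    induction b with
    | zero =>
      have h := key_rel F hF (a+1) 0
      simp only [show ¬(1:ℕ) ≤ 0 by omega, if_false, show (1:ℕ) ≤ a+1 by omega, if_true] at h
      rw [if_neg (by rw [d2_le_iff]; omega), if_neg (by rw [d2_eq_zero_iff]; omega),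
        if_neg (by rw [d2_eq_iff]; omega), d2_sub0, iha 0] at h
      simp only [or_true, if_pos] at h ⊢
      linarith [h]
    | succ b ihb =>
      have h := key_rel F hF (a+1) (b+1)
      simp only [show (1:ℕ) ≤ a+1 by omega, if_true, show (1:ℕ) ≤ b+1 by omega] at h
      rw [if_pos (by rw [d2_le_iff]; omega), if_neg (by rw [d2_eq_zero_iff]; omega),
        d2_sub0, d2_sub1, d2_sub01, iha (b+1), ihb, iha b] at h
      simp only [d2_eq_iff] at h
      rw [if_neg (by omega)]
      by_cases ha : a = 0 <;> by_cases hb : b = 0 <;> simp [ha, hb] at h <;> simpa [ha, hb] using h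

end main

theorem stmt11 (F : MvPowerSeries (Fin 2) ℤ)
    (hF : F * ((1 - MvPowerSeries.X (0 : Fin 2)) * (1 - MvPowerSeries.X (1 : Fin 2)))
      = 1 - MvPowerSeries.X (0 : Fin 2) * MvPowerSeries.X (1 : Fin 2))
    (lam : ℤ) (mu nu : ℕ) :
    (if lam = (mu : ℤ) - (nu : ℤ) then
        MvPowerSeries.coeff (R := ℤ) (Finsupp.single (0 : Fin 2) mu + Finsupp.single (1 : Fin 2) nu) F
      else 0)
      = if (lam = (mu : ℤ) ∧ nu = 0) ∨ (lam = -(nu : ℤ) ∧ lam < 0 ∧ mu = 0)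
        then 1 else 0 := by
  have hk := key F hF mu nu
  rw [show Finsupp.single (0 : Fin 2) mu + Finsupp.single (1 : Fin 2) nu = d2 mu nu from rfl]
  by_cases hl : lam = (mu : ℤ) - (nu : ℤ)
  · rw [if_pos hl, hk]
    by_cases hc : mu = 0 ∨ nu = 0
    · rw [if_pos hc, if_pos (by omega)]
    · rw [if_neg hc, if_neg (by omega)]
  · rw [if_neg hl, if_neg (by omega)]
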